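/- arXiv:2601.13272 — 3 statements merged into one kernel-verified Lean document; each statement's English description precedes it below -/
import Mathlib

section
/- Let X_1,...,X_{T} be i.i.d. with variance μ₂ and fourth central moment μ₄ < ∞, and for 2 ≤ T' < T let V(T') and V(T) be nested unbiased sample variances sharing the first T' samples. Then Var[V(T) - V(T')] = (1/T' - 1/T)(μ₄ - 3μ₂²) + 2(1/(T'-1) - 1/(T-1)) μ₂². -/
open MeasureTheory ProbabilityTheory Finset
open scoped ENNReal
set_option linter.unusedSectionVars false
set_option maxHeartbeats 1600000

section AuxStep
variable {Ω : Type*} [MeasureSpace Ω] [IsProbabilityMeasure (ℙ : Measure Ω)]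

lemma memℒp_two_mul {f g : Ω → ℝ} (hf : MemLp f 4 ℙ) (hg : MemLp g 4 ℙ) :
    MemLp (fun ω => f ω * g ω) 2 ℙ := by
  have hh : ((2:ℝ≥0∞)⁻¹) = 4⁻¹ + 4⁻¹ := by
    have h : ((2:ℝ≥0∞)⁻¹).toReal = (4⁻¹ + 4⁻¹ : ℝ≥0∞).toReal := by
      rw [ENNReal.toReal_add (by simp) (by simp)]
      simp [ENNReal.toReal_inv]; norm_num
    exact (ENNReal.toReal_eq_toReal_iff' (by simp) (by simp)).mp h
  have h := hg.smul (φ := f) hf (r := 2) (hpqr := ⟨hh.symm⟩)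
  simpa [smul_eq_mul, Pi.mul_def] using h

lemma memℒp_one_mul {f g : Ω → ℝ} (hf : MemLp f 2 ℙ) (hg : MemLp g 2 ℙ) :
    MemLp (fun ω => f ω * g ω) 1 ℙ := by
  have h := hg.smul (φ := f) hf (r := 1) (hpqr := ⟨by
    simpa using (ENNReal.inv_two_add_inv_two)⟩)
  simpa [smul_eq_mul, Pi.mul_def] using h

lemma integrable_two_mul {f g : Ω → ℝ} (hf : MemLp f 2 ℙ) (hg : MemLp g 2 ℙ) :
    Integrable (fun ω => f ω * g ω) ℙ :=
  (memℒp_one_mul hf hg).integrable le_rfl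

lemma integrable_cube {f : Ω → ℝ} (hf : MemLp f 4 ℙ) : Integrable (fun ω => f ω ^ 3) ℙ := by
  have h2 : MemLp (fun ω => f ω * f ω) 2 ℙ := memℒp_two_mul hf hf
  have h := h2.smul (φ := f) hf (r := 4/3) (hpqr := ⟨by
    rw [← one_div, ← one_div, ← one_div]; refine Eq.symm ?_
    have h' : ((1/(4/3):ℝ≥0∞)).toReal = (1/4 + 1/2 : ℝ≥0∞).toReal := by
      rw [ENNReal.toReal_add (by simp) (by simp)]
      rw [ENNReal.toReal_div, ENNReal.toReal_div, ENNReal.toReal_div, ENNReal.toReal_div]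
      norm_num
    exact (ENNReal.toReal_eq_toReal_iff' (by simp [ENNReal.div_eq_top]) (by simp)).mp h'⟩)
  have h' : MemLp (fun ω => f ω ^ 3) (4/3) ℙ := by
    have he : (fun ω => f ω ^ 3) = f • fun ω => f ω * f ω := by
      funext ω; simp [smul_eq_mul]; ring
    rw [he]; exact h
  exact h'.integrable (by
    rw [ENNReal.le_div_iff_mul_le (by norm_num) (by norm_num)]; norm_num)

lemma integrable_quart {f : Ω → ℝ} (hf : MemLp f 4 ℙ) : Integrable (fun ω => f ω ^ 4) ℙ := by
  have h2 : MemLp (fun ω => f ω * f ω) 2 ℙ := memℒp_two_mul hf hf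
  have h := h2.integrable_sq
  have h4 : (fun ω => (f ω * f ω) ^ 2) = fun ω => f ω ^ 4 := by funext ω; ring
  rwa [h4] at h

lemma memℒp_two_of_L4 {f : Ω → ℝ} (hf : MemLp f 4 ℙ) : MemLp f 2 ℙ :=
  hf.mono_exponent (by norm_num)

lemma memℒp_sq_two {f : Ω → ℝ} (hf : MemLp f 4 ℙ) : MemLp (fun ω => f ω ^ 2) 2 ℙ := by
  have := memℒp_two_mul hf hf
  have he : (fun ω => f ω * f ω) = fun ω => f ω ^ 2 := by funext ω; ring
  rwa [he] at this

lemma step_integral {Q L A : Ω → ℝ} {k μ₂ μ₄ : ℝ}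
    (hQ2 : MemLp Q 2 ℙ) (hL4 : MemLp L 4 ℙ) (hA4 : MemLp A 4 ℙ)
    (hiQ : IndepFun Q A ℙ) (hiL : IndepFun L A ℙ)
    (hiQL : IndepFun (fun ω => Q ω * L ω) A ℙ)
    (hEA : ∫ ω, A ω = 0) (hEA2 : ∫ ω, A ω ^ 2 = μ₂) (hEA4 : ∫ ω, A ω ^ 4 = μ₄)
    (hEL : ∫ ω, L ω = 0) :
    ∫ ω, (Q ω + (2 * (L ω * A ω) + k * A ω ^ 2)) ^ 2
      = (∫ ω, Q ω ^ 2) + 4 * (∫ ω, L ω ^ 2) * μ₂ + k ^ 2 * μ₄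
        + 2 * k * (∫ ω, Q ω) * μ₂ := by
  have hL2 : MemLp L 2 ℙ := memℒp_two_of_L4 hL4
  have hA2 : MemLp A 2 ℙ := memℒp_two_of_L4 hA4
  have hmulQL : Integrable (fun ω => Q ω * L ω) ℙ := integrable_two_mul hQ2 hL2
  have hiA2 : IndepFun Q (fun ω => A ω ^ 2) ℙ :=
    hiQ.comp measurable_id (measurable_id.pow_const 2)
  have hiL2A2 : IndepFun (fun ω => L ω ^ 2) (fun ω => A ω ^ 2) ℙ :=
    hiL.comp (measurable_id.pow_const 2) (measurable_id.pow_const 2)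
  have hiLA3 : IndepFun L (fun ω => A ω ^ 3) ℙ :=
    hiL.comp measurable_id (measurable_id.pow_const 3)
  -- integrability of the six terms
  have it1 : Integrable (fun ω => Q ω ^ 2) ℙ := hQ2.integrable_sq
  have it2' : Integrable (fun ω => (Q ω * L ω) * A ω) ℙ :=
    hiQL.integrable_mul hmulQL (hA4.integrable (by norm_num))
  have hAint : Integrable A ℙ := hA4.integrable (by norm_num)
  have hA2int : Integrable (fun ω => A ω ^ 2) ℙ := hA2.integrable_sq
  have hA3int : Integrable (fun ω => A ω ^ 3) ℙ := integrable_cube hA4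
  have hA4int : Integrable (fun ω => A ω ^ 4) ℙ := integrable_quart hA4
  have hLint : Integrable L ℙ := hL4.integrable (by norm_num)
  have hL2int : Integrable (fun ω => L ω ^ 2) ℙ := hL2.integrable_sq
  have hQint : Integrable Q ℙ := hQ2.integrable one_le_two
  have it3' : Integrable (fun ω => Q ω * A ω ^ 2) ℙ := hiA2.integrable_mul hQint hA2int
  have it4' : Integrable (fun ω => L ω ^ 2 * A ω ^ 2) ℙ := hiL2A2.integrable_mul hL2int hA2int
  have it5' : Integrable (fun ω => L ω * A ω ^ 3) ℙ := hiLA3.integrable_mul hLint hA3int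
  -- the six integral values
  have I2 : ∫ ω, (Q ω * L ω) * A ω = 0 := by
    have h := hiQL.integral_mul_eq_mul_integral hmulQL.aestronglyMeasurable hAint.aestronglyMeasurable
    have h2 : ∫ ω, (Q ω * L ω) * A ω = (∫ ω, Q ω * L ω) * ∫ ω, A ω := h
    rw [h2, hEA, mul_zero]
  have I3 : ∫ ω, Q ω * A ω ^ 2 = (∫ ω, Q ω) * μ₂ := by
    have h : ∫ ω, Q ω * A ω ^ 2 = (∫ ω, Q ω) * ∫ ω, A ω ^ 2 :=
      hiA2.integral_mul_eq_mul_integral hQint.aestronglyMeasurable hA2int.aestronglyMeasurable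
    rw [h, hEA2]
  have I4 : ∫ ω, L ω ^ 2 * A ω ^ 2 = (∫ ω, L ω ^ 2) * μ₂ := by
    have h : ∫ ω, L ω ^ 2 * A ω ^ 2 = (∫ ω, L ω ^ 2) * ∫ ω, A ω ^ 2 :=
      hiL2A2.integral_mul_eq_mul_integral hL2int.aestronglyMeasurable hA2int.aestronglyMeasurable
    rw [h, hEA2]
  have I5 : ∫ ω, L ω * A ω ^ 3 = 0 := by
    have h : ∫ ω, L ω * A ω ^ 3 = (∫ ω, L ω) * ∫ ω, A ω ^ 3 :=
      hiLA3.integral_mul_eq_mul_integral hLint.aestronglyMeasurable hA3int.aestronglyMeasurable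
    rw [h, hEL, zero_mul]
  -- expand the square pointwise
  have expand : ∀ ω, (Q ω + (2 * (L ω * A ω) + k * A ω ^ 2)) ^ 2
      = Q ω ^ 2 + (4 * ((Q ω * L ω) * A ω) + (2 * k * (Q ω * A ω ^ 2)
        + (4 * (L ω ^ 2 * A ω ^ 2) + (4 * k * (L ω * A ω ^ 3)
          + k ^ 2 * A ω ^ 4)))) := fun ω => by ring
  have e5 : Integrable (fun ω => 4 * k * (L ω * A ω ^ 3) + k ^ 2 * A ω ^ 4) ℙ :=
    (it5'.const_mul (4*k)).add (hA4int.const_mul (k^2))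
  have e4 : Integrable (fun ω => 4 * (L ω ^ 2 * A ω ^ 2)
      + (4 * k * (L ω * A ω ^ 3) + k ^ 2 * A ω ^ 4)) ℙ := (it4'.const_mul 4).add e5
  have e3 : Integrable (fun ω => 2 * k * (Q ω * A ω ^ 2) + (4 * (L ω ^ 2 * A ω ^ 2)
      + (4 * k * (L ω * A ω ^ 3) + k ^ 2 * A ω ^ 4))) ℙ := (it3'.const_mul (2*k)).add e4
  have e2 : Integrable (fun ω => 4 * ((Q ω * L ω) * A ω) + (2 * k * (Q ω * A ω ^ 2)
      + (4 * (L ω ^ 2 * A ω ^ 2) + (4 * k * (L ω * A ω ^ 3) + k ^ 2 * A ω ^ 4)))) ℙ :=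
    (it2'.const_mul 4).add e3
  rw [integral_congr_ae (Filter.Eventually.of_forall expand)]
  rw [integral_add it1 e2, integral_add (it2'.const_mul 4) e3,
    integral_add (it3'.const_mul (2*k)) e4, integral_add (it4'.const_mul 4) e5,
    integral_add (it5'.const_mul (4*k)) (hA4int.const_mul (k^2))]
  rw [integral_const_mul, integral_const_mul, integral_const_mul, integral_const_mul,
    integral_const_mul]
  rw [I2, I3, I4, I5, hEA4]
  ring

end AuxStep
section Aux2
variable {Ω : Type*} [MeasureSpace Ω] [IsProbabilityMeasure (ℙ : Measure Ω)]
variable {Y : ℕ → Ω → ℝ}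

lemma indep_tuple (hindep : iIndepFun Y ℙ)
    (hmeas : ∀ i, Measurable (Y i)) (n : ℕ)
    {F : Ω → ℝ} (g : ({ i // i ∈ range n } → ℝ) → ℝ) (hg : Measurable g)
    (hF : F = fun ω => g fun i => Y i.1 ω) :
    IndepFun F (Y n) ℙ := by
  have h := hindep.indepFun_finset (range n) {n} (by simp) hmeas
  have h2 := h.comp hg
    (show Measurable fun v : (({n} : Finset ℕ) → ℝ) => v ⟨n, mem_singleton_self n⟩ from
      measurable_pi_apply _)
  rw [hF]
  exact h2

end Aux2
section Aux3
variable {Ω : Type*} [MeasureSpace Ω] [IsProbabilityMeasure (ℙ : Measure Ω)]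
variable {Y : ℕ → Ω → ℝ} {μ₂ : ℝ}

lemma EYY (hindep : iIndepFun Y ℙ)
    (hL4 : ∀ i, MemLp (Y i) 4 ℙ)
    (h1 : ∀ i, ∫ ω, Y i ω = 0) (h2 : ∀ i, ∫ ω, (Y i ω) ^ 2 = μ₂) (i j : ℕ) :
    ∫ ω, Y i ω * Y j ω = if i = j then μ₂ else 0 := by
  by_cases h : i = j
  · subst h; simp only [if_pos rfl, ← h2 i]
    congr 1; funext ω; ring
  · rw [if_neg h]
    have hind := hindep.indepFun h
    have := hind.integral_mul_eq_mul_integral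
      ((hL4 i).integrable (by norm_num)).aestronglyMeasurable ((hL4 j).integrable (by norm_num)).aestronglyMeasurable
    rw [show (fun ω => Y i ω * Y j ω) = Y i * Y j from rfl, this, h1 i, zero_mul]

lemma E_double_sum (hindep : iIndepFun Y ℙ)
    (hL4 : ∀ i, MemLp (Y i) 4 ℙ)
    (h1 : ∀ i, ∫ ω, Y i ω = 0) (h2 : ∀ i, ∫ ω, (Y i ω) ^ 2 = μ₂)
    (a : ℕ → ℕ → ℝ) (n : ℕ) :
    ∫ ω, ∑ i ∈ range n, ∑ j ∈ range n, a i j * (Y i ω * Y j ω)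
      = μ₂ * ∑ i ∈ range n, a i i := by
  have hint : ∀ i j : ℕ, Integrable (fun ω => a i j * (Y i ω * Y j ω)) ℙ := fun i j =>
    (integrable_two_mul (memℒp_two_of_L4 (hL4 i)) (memℒp_two_of_L4 (hL4 j))).const_mul _
  rw [integral_finset_sum _ (fun i _ => integrable_finset_sum _ (fun j _ => hint i j))]
  have key : ∀ i ∈ range n, ∫ ω, ∑ j ∈ range n, a i j * (Y i ω * Y j ω)
      = ∑ j ∈ range n, a i j * (if i = j then μ₂ else 0) := by
    intro i _
    rw [integral_finset_sum _ (fun j _ => hint i j)]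
    refine Finset.sum_congr rfl fun j _ => ?_
    rw [integral_const_mul, EYY hindep hL4 h1 h2 i j]
  rw [Finset.sum_congr rfl key]
  simp only [mul_ite, mul_zero, Finset.sum_ite_eq, Finset.mem_range]
  rw [Finset.mul_sum]
  refine Finset.sum_congr rfl fun i hi => ?_
  rw [if_pos (Finset.mem_range.mp hi), mul_comm]

end Aux3
section AuxQuad
variable {Ω : Type*} [MeasureSpace Ω] [IsProbabilityMeasure (ℙ : Measure Ω)]

lemma quad_sq {Y : ℕ → Ω → ℝ} {μ₂ μ₄ : ℝ}
    (hmeas : ∀ i, Measurable (Y i))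
    (hindep : iIndepFun Y ℙ)
    (hL4 : ∀ i, MemLp (Y i) 4 ℙ)
    (h1 : ∀ i, ∫ ω, Y i ω = 0) (h2 : ∀ i, ∫ ω, (Y i ω) ^ 2 = μ₂)
    (h4 : ∀ i, ∫ ω, (Y i ω) ^ 4 = μ₄)
    (c : ℕ → ℕ → ℝ) (hc : ∀ i j, c i j = c j i) (n : ℕ) :
    ∫ ω, (∑ i ∈ range n, ∑ j ∈ range n, c i j * (Y i ω * Y j ω)) ^ 2
      = (μ₄ - 3 * μ₂ ^ 2) * (∑ i ∈ range n, c i i ^ 2)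
        + μ₂ ^ 2 * ((∑ i ∈ range n, c i i) ^ 2
            + 2 * ∑ i ∈ range n, ∑ j ∈ range n, c i j ^ 2) := by
  induction n with
  | zero => simp
  | succ n ih =>
    have hQ2 : MemLp (fun ω => ∑ i ∈ range n, ∑ j ∈ range n,
        c i j * (Y i ω * Y j ω)) 2 ℙ :=
      memLp_finset_sum _ (fun i _ => memLp_finset_sum _ fun j _ =>
        ((memℒp_two_mul (hL4 i) (hL4 j)).const_mul _))
    have hLmem : MemLp (fun ω => ∑ i ∈ range n, c i n * Y i ω) 4 ℙ :=
      memLp_finset_sum _ fun i _ => (hL4 i).const_mul _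
    have hiQ : IndepFun (fun ω => ∑ i ∈ range n, ∑ j ∈ range n,
        c i j * (Y i ω * Y j ω)) (Y n) ℙ := by
      apply indep_tuple hindep hmeas n
        (g := fun v => ∑ i ∈ (range n).attach, ∑ j ∈ (range n).attach,
          c i.1 j.1 * (v i * v j))
      · apply Finset.measurable_sum; intro i _
        apply Finset.measurable_sum; intro j _
        exact ((measurable_pi_apply i).mul (measurable_pi_apply j)).const_mul _
      · funext ω
        rw [← Finset.sum_attach (range n)
          (fun i => ∑ j ∈ range n, c i j * (Y i ω * Y j ω))]
        exact Finset.sum_congr rfl fun i _ =>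
          (Finset.sum_attach (range n) (fun j => c i.1 j * (Y i.1 ω * Y j ω))).symm
    have hiL : IndepFun (fun ω => ∑ i ∈ range n, c i n * Y i ω) (Y n) ℙ := by
      apply indep_tuple hindep hmeas n
        (g := fun v => ∑ i ∈ (range n).attach, c i.1 n * v i)
      · apply Finset.measurable_sum; intro i _
        exact (measurable_pi_apply i).const_mul _
      · funext ω
        exact (Finset.sum_attach (range n) (fun i => c i n * Y i ω)).symm
    have hiQL : IndepFun (fun ω => (∑ i ∈ range n, ∑ j ∈ range n,
        c i j * (Y i ω * Y j ω)) * (∑ i ∈ range n, c i n * Y i ω)) (Y n) ℙ := by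
      apply indep_tuple hindep hmeas n
        (g := fun v => (∑ i ∈ (range n).attach, ∑ j ∈ (range n).attach,
          c i.1 j.1 * (v i * v j)) * (∑ i ∈ (range n).attach, c i.1 n * v i))
      · apply Measurable.mul
        · apply Finset.measurable_sum; intro i _
          apply Finset.measurable_sum; intro j _
          exact ((measurable_pi_apply i).mul (measurable_pi_apply j)).const_mul _
        · apply Finset.measurable_sum; intro i _
          exact (measurable_pi_apply i).const_mul _
      · funext ω
        congr 1
        · rw [← Finset.sum_attach (range n)
            (fun i => ∑ j ∈ range n, c i j * (Y i ω * Y j ω))]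
          exact Finset.sum_congr rfl fun i _ =>
            (Finset.sum_attach (range n) (fun j => c i.1 j * (Y i.1 ω * Y j ω))).symm
        · exact (Finset.sum_attach (range n) (fun i => c i n * Y i ω)).symm
    have EL : ∫ ω, ∑ i ∈ range n, c i n * Y i ω = 0 := by
      rw [integral_finset_sum _ (fun i _ =>
        ((hL4 i).integrable (by norm_num)).const_mul _)]
      refine Finset.sum_eq_zero fun i _ => ?_
      rw [integral_const_mul, h1 i, mul_zero]
    have ELsq : ∫ ω, (∑ i ∈ range n, c i n * Y i ω) ^ 2
        = μ₂ * ∑ i ∈ range n, c i n ^ 2 := by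
      have hpt : ∀ ω, (∑ i ∈ range n, c i n * Y i ω) ^ 2
          = ∑ i ∈ range n, ∑ j ∈ range n, (c i n * c j n) * (Y i ω * Y j ω) := by
        intro ω; rw [sq, Finset.sum_mul_sum]
        exact Finset.sum_congr rfl fun i _ => Finset.sum_congr rfl fun j _ => by ring
      rw [integral_congr_ae (Filter.Eventually.of_forall hpt),
        E_double_sum hindep hL4 h1 h2]
      congr 1
      exact Finset.sum_congr rfl fun i _ => by ring
    have EQ : ∫ ω, ∑ i ∈ range n, ∑ j ∈ range n, c i j * (Y i ω * Y j ω)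
        = μ₂ * ∑ i ∈ range n, c i i := E_double_sum hindep hL4 h1 h2 c n
    have hsplit : ∀ ω, (∑ i ∈ range (n+1), ∑ j ∈ range (n+1),
        c i j * (Y i ω * Y j ω)) ^ 2
        = ((∑ i ∈ range n, ∑ j ∈ range n, c i j * (Y i ω * Y j ω))
          + (2 * ((∑ i ∈ range n, c i n * Y i ω) * Y n ω)
            + c n n * Y n ω ^ 2)) ^ 2 := by
      intro ω
      have e0 : ∑ i ∈ range (n+1), ∑ j ∈ range (n+1), c i j * (Y i ω * Y j ω)
          = (∑ i ∈ range n, ∑ j ∈ range n, c i j * (Y i ω * Y j ω))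
            + (2 * ((∑ i ∈ range n, c i n * Y i ω) * Y n ω)
              + c n n * Y n ω ^ 2) := by
        simp only [Finset.sum_range_succ, Finset.sum_add_distrib]
        have e1 : ∑ i ∈ range n, c i n * (Y i ω * Y n ω)
            = (∑ i ∈ range n, c i n * Y i ω) * Y n ω := by
          rw [Finset.sum_mul]; exact Finset.sum_congr rfl fun i _ => by ring
        have e2 : ∑ j ∈ range n, c n j * (Y n ω * Y j ω)
            = (∑ i ∈ range n, c i n * Y i ω) * Y n ω := by
          rw [Finset.sum_mul]
          exact Finset.sum_congr rfl fun j _ => by rw [hc n j]; ring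
        rw [e1, e2]; ring
      rw [e0]
    rw [integral_congr_ae (Filter.Eventually.of_forall hsplit)]
    rw [step_integral hQ2 hLmem (hL4 n) hiQ hiL hiQL (h1 n) (h2 n) (h4 n) EL]
    rw [ih, ELsq, EQ]
    have hdd : ∑ i ∈ range (n+1), ∑ j ∈ range (n+1), c i j ^ 2
        = (∑ i ∈ range n, ∑ j ∈ range n, c i j ^ 2)
          + 2 * (∑ i ∈ range n, c i n ^ 2) + c n n ^ 2 := by
      simp only [Finset.sum_range_succ, Finset.sum_add_distrib]
      have e2 : ∑ j ∈ range n, c n j ^ 2 = ∑ j ∈ range n, c j n ^ 2 :=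
        Finset.sum_congr rfl fun j _ => by rw [hc n j]
      rw [e2]; ring
    rw [hdd, Finset.sum_range_succ (fun i => c i i ^ 2), Finset.sum_range_succ (fun i => c i i)]
    ring

end AuxQuad

noncomputable def aCoefQ (S i j : ℕ) : ℝ :=
  if i = j then 1 / (S : ℝ) else -(1 / (S * ((S : ℝ) - 1)))

lemma Vform {Ω' : Type*} (S : ℕ) (hS : 2 ≤ S) (X : ℕ → Ω' → ℝ) (μ : ℝ) (ω : Ω') :
    (∑ t ∈ range S, (X t ω - (∑ s ∈ range S, X s ω) / S) ^ 2) / ((S : ℝ) - 1)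
      = ∑ i ∈ range S, ∑ j ∈ range S, aCoefQ S i j * ((X i ω - μ) * (X j ω - μ)) := by
  have hS0 : (S : ℝ) ≠ 0 := Nat.cast_ne_zero.mpr (by omega)
  have hS2 : (2 : ℝ) ≤ (S : ℝ) := by exact_mod_cast hS
  have hS1 : (S : ℝ) - 1 ≠ 0 := by linarith
  set s := ∑ i ∈ range S, (X i ω - μ) with hs
  set A := ∑ i ∈ range S, (X i ω - μ) ^ 2 with hA
  have hsumX : ∑ t ∈ range S, X t ω = s + S * μ := by
    rw [hs, Finset.sum_sub_distrib, Finset.sum_const, card_range]; ring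
  have hterm : ∀ t, X t ω - (∑ u ∈ range S, X u ω) / S = (X t ω - μ) - s / S := by
    intro t; rw [hsumX]; field_simp; ring
  have hLHS : ∑ t ∈ range S, (X t ω - (∑ u ∈ range S, X u ω) / S) ^ 2
      = A - s ^ 2 / S := by
    have h1 : ∀ t ∈ range S, (X t ω - (∑ u ∈ range S, X u ω) / S) ^ 2
        = ((X t ω - μ) ^ 2 - 2 * (s / S) * (X t ω - μ)) + (s / S) ^ 2 :=
      fun t _ => by rw [hterm t]; ring
    rw [Finset.sum_congr rfl h1, Finset.sum_add_distrib, Finset.sum_sub_distrib,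
      ← Finset.mul_sum, Finset.sum_const, card_range, ← hs, ← hA]
    have hSS : (S:ℝ) ^ 2 * (S:ℝ)⁻¹ ^ 2 = 1 := by field_simp
    field_simp; linear_combination (s ^ 2) * hSS
  have hRHS : ∑ i ∈ range S, ∑ j ∈ range S, aCoefQ S i j * ((X i ω - μ) * (X j ω - μ))
      = -(1 / (S * ((S:ℝ) - 1))) * s ^ 2 + (1 / S + 1 / (S * ((S:ℝ) - 1))) * A := by
    have hterm2 : ∀ i ∈ range S, ∀ j ∈ range S,
        aCoefQ S i j * ((X i ω - μ) * (X j ω - μ))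
        = -(1 / (S * ((S:ℝ) - 1))) * ((X i ω - μ) * (X j ω - μ))
          + (if i = j then (1 / S + 1 / (S * ((S:ℝ) - 1))) * ((X i ω - μ) * (X j ω - μ))
              else 0) := by
      intro i _ j _; unfold aCoefQ; by_cases h : i = j <;> simp [h] <;> ring
    rw [Finset.sum_congr rfl fun i hi => Finset.sum_congr rfl fun j hj => hterm2 i hi j hj]
    simp only [Finset.sum_add_distrib]
    have e1 : ∑ i ∈ range S, ∑ j ∈ range S,
        -(1 / (S * ((S:ℝ) - 1))) * ((X i ω - μ) * (X j ω - μ))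
        = -(1 / (S * ((S:ℝ) - 1))) * s ^ 2 := by
      rw [show s ^ 2 = s * s from sq s, hs, Finset.sum_mul_sum, Finset.mul_sum]
      exact Finset.sum_congr rfl fun i _ => by rw [Finset.mul_sum]
    have e2 : ∑ i ∈ range S, ∑ j ∈ range S,
        (if i = j then (1 / S + 1 / (S * ((S:ℝ) - 1))) * ((X i ω - μ) * (X j ω - μ)) else 0)
        = (1 / S + 1 / (S * ((S:ℝ) - 1))) * A := by
      have einner : ∀ i ∈ range S, (∑ j ∈ range S,
          if i = j then (1 / S + 1 / (S * ((S:ℝ) - 1))) * ((X i ω - μ) * (X j ω - μ)) else 0)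
          = (1 / S + 1 / (S * ((S:ℝ) - 1))) * (X i ω - μ) ^ 2 := by
        intro i hi
        rw [Finset.sum_ite_eq (range S) i
          (fun j => (1 / S + 1 / (S * ((S:ℝ) - 1))) * ((X i ω - μ) * (X j ω - μ))), if_pos hi]
        ring
      rw [Finset.sum_congr rfl einner, hA, ← Finset.mul_sum]
    rw [e1, e2]
  rw [hLHS, hRHS]
  field_simp; ring

noncomputable def cCoef (T' T i j : ℕ) : ℝ :=
  aCoefQ T i j - (if i < T' ∧ j < T' then aCoefQ T' i j else 0)

lemma sum_ite_lt {T' T : ℕ} (h : T' ≤ T) (f : ℕ → ℝ) :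
    ∑ i ∈ range T, (if i < T' then f i else 0) = ∑ i ∈ range T', f i := by
  rw [← Finset.sum_subset (Finset.range_subset_range.mpr h)
    (fun x _ hx => by rw [if_neg (by simpa using hx)])]
  exact Finset.sum_congr rfl fun i hi => if_pos (Finset.mem_range.mp hi)

lemma diag_sum (n : ℕ) (d e : ℝ) :
    ∑ i ∈ range n, ∑ j ∈ range n, (if i = j then d else e)
      = n * d + ((n:ℝ) * n - n) * e := by
  have inner : ∀ i ∈ range n, ∑ j ∈ range n, (if i = j then d else e)
      = n * e + (d - e) := by
    intro i hi
    have h1 : ∀ j, (if i = j then d else e) = e + (if i = j then d - e else 0) := by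
      intro j; by_cases h : i = j <;> simp [h]
    rw [Finset.sum_congr rfl fun j _ => h1 j, Finset.sum_add_distrib, Finset.sum_const,
      card_range, Finset.sum_ite_eq (range n) i fun _ => d - e, if_pos hi]
    simp
  rw [Finset.sum_congr rfl inner, Finset.sum_const, card_range]
  ring

lemma extend_double {T' T : ℕ} (h : T' ≤ T) (f : ℕ → ℕ → ℝ) :
    ∑ i ∈ range T, ∑ j ∈ range T, (if i < T' ∧ j < T' then f i j else 0)
      = ∑ i ∈ range T', ∑ j ∈ range T', f i j := by
  have h1 : ∀ i, ∑ j ∈ range T, (if i < T' ∧ j < T' then f i j else 0)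
      = if i < T' then ∑ j ∈ range T', f i j else 0 := by
    intro i; by_cases hi : i < T'
    · rw [if_pos hi, ← sum_ite_lt h (f i)]
      exact Finset.sum_congr rfl fun j _ => by simp [hi]
    · rw [if_neg hi]
      exact Finset.sum_eq_zero fun j _ => by simp [hi]
  rw [Finset.sum_congr rfl fun i _ => h1 i, sum_ite_lt h]

lemma cast_facts {T' T : ℕ} (hT' : 2 ≤ T') (hTT : T' < T) : (T':ℝ) ≠ 0 ∧ (T':ℝ) - 1 ≠ 0 ∧ (T:ℝ) ≠ 0 ∧ (T:ℝ) - 1 ≠ 0 := by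
  have h1 : (2:ℝ) ≤ (T':ℝ) := by exact_mod_cast hT'
  have h2 : (T':ℝ) < (T:ℝ) := by exact_mod_cast hTT
  refine ⟨by linarith, by linarith, by linarith, by linarith⟩

lemma S0sum {T' T : ℕ} (hT' : 2 ≤ T') (hTT : T' < T) : ∑ i ∈ range T, cCoef T' T i i = 0 := by
  obtain ⟨h1, h2, h3, h4⟩ := cast_facts hT' hTT
  have hpt : ∀ i, cCoef T' T i i = 1/(T:ℝ) - (if i < T' then 1/(T':ℝ) else 0) := by
    intro i; unfold cCoef aCoefQ
    by_cases hi : i < T' <;> simp [hi]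
  rw [Finset.sum_congr rfl fun i _ => hpt i, Finset.sum_sub_distrib, Finset.sum_const,
    card_range, sum_ite_lt hTT.le, Finset.sum_const, card_range]
  rw [nsmul_eq_mul, nsmul_eq_mul, mul_one_div_cancel h3, mul_one_div_cancel h1, sub_self]

lemma Sdsum {T' T : ℕ} (hT' : 2 ≤ T') (hTT : T' < T) : ∑ i ∈ range T, (cCoef T' T i i) ^ 2 = 1/(T':ℝ) - 1/(T:ℝ) := by
  obtain ⟨h1, h2, h3, h4⟩ := cast_facts hT' hTT
  have hpt : ∀ i, (cCoef T' T i i) ^ 2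
      = (1/(T:ℝ))^2 + (if i < T' then (1/(T:ℝ) - 1/(T':ℝ))^2 - (1/(T:ℝ))^2 else 0) := by
    intro i; unfold cCoef aCoefQ
    by_cases hi : i < T' <;> simp [hi] <;> ring
  rw [Finset.sum_congr rfl fun i _ => hpt i, Finset.sum_add_distrib, Finset.sum_const,
    card_range, sum_ite_lt hTT.le, Finset.sum_const, card_range]
  field_simp
  have ha : (T:ℝ) ^ 2 * (T:ℝ)⁻¹ ^ 2 = 1 := by field_simp
  have hb : (T':ℝ) ^ 2 * (T':ℝ)⁻¹ ^ 2 = 1 := by field_simp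
  linear_combination ((T':ℝ) + (-2 * (T':ℝ) + T) * ((T':ℝ) ^ 2 * (T':ℝ)⁻¹ ^ 2)) * ha
    + (-2 * (T':ℝ) + T) * hb

lemma Sfsum {T' T : ℕ} (hT' : 2 ≤ T') (hTT : T' < T) : ∑ i ∈ range T, ∑ j ∈ range T, (cCoef T' T i j) ^ 2
    = 1/((T':ℝ) - 1) - 1/((T:ℝ) - 1) := by
  obtain ⟨h1, h2, h3, h4⟩ := cast_facts hT' hTT
  have hpt : ∀ i j, (cCoef T' T i j) ^ 2
      = (aCoefQ T i j) ^ 2 + (if i < T' ∧ j < T' then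
          -2 * (aCoefQ T i j * aCoefQ T' i j) + (aCoefQ T' i j) ^ 2 else 0) := by
    intro i j; unfold cCoef
    by_cases hij : i < T' ∧ j < T' <;> simp [hij] <;> ring
  rw [Finset.sum_congr rfl fun i _ => Finset.sum_congr rfl fun j _ => hpt i j]
  simp only [Finset.sum_add_distrib]
  have e1 : ∑ i ∈ range T, ∑ j ∈ range T, (aCoefQ T i j) ^ 2
      = T * ((1/(T:ℝ))^2) + ((T:ℝ) * T - T) * ((1/((T:ℝ) * ((T:ℝ)-1)))^2) := by
    rw [← diag_sum T ((1/(T:ℝ))^2) ((1/((T:ℝ) * ((T:ℝ)-1)))^2)]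
    refine Finset.sum_congr rfl fun i _ => Finset.sum_congr rfl fun j _ => ?_
    unfold aCoefQ; by_cases hij : i = j <;> simp [hij] <;> ring
  have e2 : ∑ i ∈ range T, ∑ j ∈ range T, (if i < T' ∧ j < T' then
        -2 * (aCoefQ T i j * aCoefQ T' i j) + (aCoefQ T' i j) ^ 2 else 0)
      = T' * (-2 * (1/(T:ℝ) * (1/(T':ℝ))) + (1/(T':ℝ))^2)
        + ((T':ℝ) * T' - T') * (-2 * (1/((T:ℝ) * ((T:ℝ)-1)) * (1/((T':ℝ) * ((T':ℝ)-1))))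
            + (1/((T':ℝ) * ((T':ℝ)-1)))^2) := by
    rw [extend_double hTT.le]
    rw [← diag_sum T' (-2 * (1/(T:ℝ) * (1/(T':ℝ))) + (1/(T':ℝ))^2)
      (-2 * (1/((T:ℝ) * ((T:ℝ)-1)) * (1/((T':ℝ) * ((T':ℝ)-1)))) + (1/((T':ℝ) * ((T':ℝ)-1)))^2)]
    refine Finset.sum_congr rfl fun i _ => Finset.sum_congr rfl fun j _ => ?_
    unfold aCoefQ; by_cases hij : i = j <;> simp [hij] <;> ring
  rw [e1, e2]
  field_simp
  ring


/-- Variance of the coupled sample-variance increment for nested samples: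
`Var[V(T) - V(T')] = (1/T' - 1/T)(μ₄ - 3μ₂²) + 2(1/(T'-1) - 1/(T-1)) μ₂²`. -/
theorem nested_sample_variance_increment_variance
    {Ω : Type*} [MeasureSpace Ω] [IsProbabilityMeasure (ℙ : Measure Ω)]
    (T' T : ℕ) (hT' : 2 ≤ T') (hTT : T' < T) (X : ℕ → Ω → ℝ)
    (hmeas : ∀ i, Measurable (X i))
    (hindep : iIndepFun X ℙ)
    (hident : ∀ i, IdentDistrib (X i) (X 0) ℙ ℙ)
    (hL4 : ∀ i, MemLp (X i) 4 ℙ)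
    (μ μ₂ μ₄ : ℝ) (hμ : μ = ∫ ω, X 0 ω)
    (hμ₂ : μ₂ = ∫ ω, (X 0 ω - μ) ^ 2)
    (hμ₄ : μ₄ = ∫ ω, (X 0 ω - μ) ^ 4)
    (V : ℕ → Ω → ℝ)
    (hV : ∀ S ω, V S ω
      = (∑ t ∈ range S, (X t ω - (∑ s ∈ range S, X s ω) / S) ^ 2) / ((S : ℝ) - 1)) :
    variance (fun ω => V T ω - V T' ω) ℙ
      = (1 / (T' : ℝ) - 1 / (T : ℝ)) * (μ₄ - 3 * μ₂ ^ 2)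
        + 2 * (1 / ((T' : ℝ) - 1) - 1 / ((T : ℝ) - 1)) * μ₂ ^ 2 := by
  -- centered variables
  set Y : ℕ → Ω → ℝ := fun i ω => X i ω - μ with hYdef
  have hYmeas : ∀ i, Measurable (Y i) := fun i => (hmeas i).sub measurable_const
  have hYindep : iIndepFun Y ℙ := by
    have := hindep.comp (fun _ x => x - μ) (fun _ => measurable_id.sub_const μ)
    exact this
  have hY4 : ∀ i, MemLp (Y i) 4 ℙ := fun i => (hL4 i).sub (memLp_const μ)
  have hXint : ∀ i, Integrable (X i) ℙ := fun i => (hL4 i).integrable (by norm_num)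
  have hEX : ∀ i, ∫ ω, X i ω = μ := fun i => by rw [hμ]; exact (hident i).integral_eq
  have hY1 : ∀ i, ∫ ω, Y i ω = 0 := by
    intro i
    have : ∫ ω, X i ω - μ ∂ℙ = (∫ ω, X i ω) - ∫ _ω, μ ∂(ℙ : Measure Ω) :=
      integral_sub (hXint i) (integrable_const μ)
    simp only [hYdef]
    rw [this, integral_const, hEX i]
    simp
  have hY2 : ∀ i, ∫ ω, (Y i ω) ^ 2 = μ₂ := by
    intro i
    have h := ((hident i).comp (u := fun x : ℝ => (x - μ) ^ 2)
      ((measurable_id.sub_const μ).pow_const 2)).integral_eq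
    rw [hμ₂]; exact h
  have hY4m : ∀ i, ∫ ω, (Y i ω) ^ 4 = μ₄ := by
    intro i
    have h := ((hident i).comp (u := fun x : ℝ => (x - μ) ^ 4)
      ((measurable_id.sub_const μ).pow_const 4)).integral_eq
    rw [hμ₄]; exact h
  -- pointwise identification with the quadratic form
  have hsym : ∀ i j, cCoef T' T i j = cCoef T' T j i := by
    intro i j; unfold cCoef aCoefQ
    by_cases h : i = j
    · simp [h]
    · have h' : ¬ j = i := fun hh => h hh.symm
      simp [h, h', and_comm]
  have hpoint : ∀ ω, V T ω - V T' ω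
      = ∑ i ∈ range T, ∑ j ∈ range T, cCoef T' T i j * (Y i ω * Y j ω) := by
    intro ω
    rw [hV T ω, hV T' ω, Vform T (by omega) X μ ω, Vform T' hT' X μ ω]
    have hext : ∑ i ∈ range T', ∑ j ∈ range T', aCoefQ T' i j * ((X i ω - μ) * (X j ω - μ))
        = ∑ i ∈ range T, ∑ j ∈ range T,
            (if i < T' ∧ j < T' then aCoefQ T' i j else 0) * ((X i ω - μ) * (X j ω - μ)) := by
      rw [← extend_double hTT.le (fun i j => aCoefQ T' i j * ((X i ω - μ) * (X j ω - μ)))]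
      refine Finset.sum_congr rfl fun i _ => Finset.sum_congr rfl fun j _ => ?_
      by_cases h : i < T' ∧ j < T' <;> simp [h]
    rw [hext, ← Finset.sum_sub_distrib]
    refine Finset.sum_congr rfl fun i _ => ?_
    rw [← Finset.sum_sub_distrib]
    refine Finset.sum_congr rfl fun j _ => ?_
    unfold cCoef; simp only [hYdef]; ring
  -- aCoef = aCoefQ : they are the same definition
  rw [show (fun ω => V T ω - V T' ω)
      = fun ω => ∑ i ∈ range T, ∑ j ∈ range T, cCoef T' T i j * (Y i ω * Y j ω)
    from funext hpoint]
  have hD2 : MemLp (fun ω => ∑ i ∈ range T, ∑ j ∈ range T,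
      cCoef T' T i j * (Y i ω * Y j ω)) 2 ℙ :=
    memLp_finset_sum _ (fun i _ => memLp_finset_sum _ fun j _ =>
      ((memℒp_two_mul (hY4 i) (hY4 j)).const_mul _))
  rw [variance_eq_sub hD2]
  have hsq : (∫ ω, ((fun ω => ∑ i ∈ range T, ∑ j ∈ range T,
        cCoef T' T i j * (Y i ω * Y j ω)) ^ 2) ω)
      = ∫ ω, (∑ i ∈ range T, ∑ j ∈ range T, cCoef T' T i j * (Y i ω * Y j ω)) ^ 2 := rfl
  rw [hsq, quad_sq hYmeas hYindep hY4 hY1 hY2 hY4m (cCoef T' T) hsym T,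
    E_double_sum hYindep hY4 hY1 hY2 (cCoef T' T) T,
    S0sum hT' hTT, Sdsum hT' hTT, Sfsum hT' hTT]
  ring
end

section
/- (Variance of the MLMC mean estimator.) With the telescoping estimator 𝒴 of the previous setup, built from independent outer replicates of Y(T_0) and of the nested increments ΔY(T_ℓ) from i.i.d. variables with variance μ₂, Var[𝒴] = μ₂ ( 1/(M_0 T_0) + ∑_{ℓ=1}^L (1/M_ℓ)(1/T_{ℓ-1} - 1/T_ℓ) ). -/
open MeasureTheory ProbabilityTheory Finset

/-- Sample mean of the first `S` inner samples of replicate `m` at level `ℓ`. -/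
noncomputable def levelMean {Ω : Type*} (X : ℕ → ℕ → ℕ → Ω → ℝ) (ℓ m S : ℕ) (ω : Ω) : ℝ :=
  (∑ t ∈ Finset.range S, X ℓ m t ω) / S

/-- Variance of the telescoping MLMC mean estimator:
`Var[𝒴] = μ₂ (1/(M₀T₀) + ∑_ℓ (1/M_ℓ)(1/T_{ℓ-1} - 1/T_ℓ))`. -/
theorem mlmc_mean_estimator_variance
    {Ω : Type*} [MeasureSpace Ω] [IsProbabilityMeasure (ℙ : Measure Ω)]
    (L : ℕ) (T M : ℕ → ℕ)
    (hT0 : 1 ≤ T 0) (hTmono : ∀ ℓ < L, T ℓ < T (ℓ + 1)) (hM : ∀ ℓ ≤ L, 1 ≤ M ℓ)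
    (X : ℕ → ℕ → ℕ → Ω → ℝ)
    (hmeas : ∀ ℓ m t, Measurable (X ℓ m t))
    (hindep : iIndepFun
      (fun p : ℕ × ℕ × ℕ => X p.1 p.2.1 p.2.2) ℙ)
    (hident : ∀ ℓ m t, IdentDistrib (X ℓ m t) (X 0 0 0) ℙ ℙ)
    (hL2 : ∀ ℓ m t, MemLp (X ℓ m t) 2 ℙ)
    (μ₂ : ℝ) (hμ₂ : μ₂ = variance (X 0 0 0) ℙ) :
    variance (fun ω => (∑ m ∈ range (M 0), levelMean X 0 m (T 0) ω) / (M 0)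
        + ∑ ℓ ∈ Icc 1 L, (∑ m ∈ range (M ℓ),
            (levelMean X ℓ m (T ℓ) ω - levelMean X ℓ m (T (ℓ - 1)) ω)) / (M ℓ)) ℙ
      = μ₂ * (1 / ((M 0 : ℝ) * T 0)
          + ∑ ℓ ∈ Icc 1 L, (1 / (M ℓ : ℝ)) * (1 / (T (ℓ - 1) : ℝ) - 1 / (T ℓ : ℝ))) := by
  classical
  -- basic positivity facts
  have hT : ∀ ℓ ≤ L, 1 ≤ T ℓ := by
    intro ℓ hℓ
    induction ℓ with
    | zero => exact hT0
    | succ n ih =>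
      have hn : n < L := Nat.lt_of_succ_le hℓ
      exact le_of_lt (lt_of_le_of_lt (ih hn.le) (hTmono n hn))
  have hTlt : ∀ ℓ ∈ Icc 1 L, T (ℓ - 1) < T ℓ := by
    intro ℓ hℓ
    rw [Finset.mem_Icc] at hℓ
    have h1 : ℓ - 1 < L := by omega
    have := hTmono (ℓ - 1) h1
    rwa [Nat.sub_add_cancel hℓ.1] at this
  -- the coefficient function
  set c : ℕ × ℕ × ℕ → ℝ := fun p =>
    if p.1 = 0 then 1 / ((M 0 : ℝ) * T 0)
    else (1 / (M p.1 : ℝ)) * (1 / (T p.1 : ℝ) -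
      if p.2.2 < T (p.1 - 1) then 1 / (T (p.1 - 1) : ℝ) else 0) with hc
  -- the index set
  set P : Finset (ℕ × ℕ × ℕ) :=
    (Finset.range (L + 1)).biUnion
      (fun ℓ => {ℓ} ×ˢ (Finset.range (M ℓ) ×ˢ Finset.range (T ℓ))) with hP
  have hdisj : Set.PairwiseDisjoint ↑(Finset.range (L + 1))
      (fun ℓ => ({ℓ} : Finset ℕ) ×ˢ (Finset.range (M ℓ) ×ˢ Finset.range (T ℓ))) := by
    intro i _ j _ hij
    apply Finset.disjoint_left.2
    intro p hp hp'
    simp only [Finset.mem_product, Finset.mem_singleton] at hp hp'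
    exact hij (hp.1 ▸ hp'.1 ▸ rfl)
  have hsum : ∀ f : ℕ × ℕ × ℕ → ℝ, ∑ p ∈ P, f p
      = ∑ ℓ ∈ Finset.range (L + 1), ∑ m ∈ Finset.range (M ℓ),
          ∑ t ∈ Finset.range (T ℓ), f (ℓ, m, t) := by
    intro f
    rw [hP, Finset.sum_biUnion hdisj]
    refine Finset.sum_congr rfl fun ℓ _ => ?_
    rw [Finset.sum_product, Finset.sum_singleton, Finset.sum_product]
  have hrange : Finset.range (L + 1) = insert 0 (Finset.Icc 1 L) := by
    ext n
    simp only [Finset.mem_range, Finset.mem_insert, Finset.mem_Icc]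
    omega
  have h0notin : (0 : ℕ) ∉ Finset.Icc 1 L := by simp
  -- rewrite the estimator as a single linear combination
  have hfun : (fun ω => (∑ m ∈ range (M 0), levelMean X 0 m (T 0) ω) / (M 0)
        + ∑ ℓ ∈ Icc 1 L, (∑ m ∈ range (M ℓ),
            (levelMean X ℓ m (T ℓ) ω - levelMean X ℓ m (T (ℓ - 1)) ω)) / (M ℓ))
      = ∑ p ∈ P, (fun ω => c p * X p.1 p.2.1 p.2.2 ω) := by
    funext ω
    rw [Finset.sum_apply, hsum, hrange, Finset.sum_insert h0notin]
    congr 1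
    · -- level 0
      simp only [levelMean, Finset.sum_div]
      refine Finset.sum_congr rfl fun m _ => Finset.sum_congr rfl fun t _ => ?_
      simp only [hc, reduceIte]
      ring
    · -- levels 1..L
      refine Finset.sum_congr rfl fun ℓ hℓ => ?_
      have hℓ0 : ℓ ≠ 0 := by
        rw [Finset.mem_Icc] at hℓ; omega
      have hT'le : T (ℓ - 1) ≤ T ℓ := (hTlt ℓ hℓ).le
      rw [Finset.sum_div]
      refine Finset.sum_congr rfl fun m _ => ?_
      simp only [hc, if_neg hℓ0, levelMean]
      have e1 : ∑ t ∈ Finset.range (T ℓ),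
            (1 / (M ℓ : ℝ)) * (1 / (T ℓ : ℝ) -
              if t < T (ℓ - 1) then 1 / (T (ℓ - 1) : ℝ) else 0) * X ℓ m t ω
          = (∑ t ∈ Finset.range (T ℓ), (1 / (M ℓ : ℝ)) * (1 / (T ℓ : ℝ)) * X ℓ m t ω)
            - ∑ t ∈ Finset.range (T ℓ),
                (if t < T (ℓ - 1) then 1 / (T (ℓ - 1) : ℝ) else 0) * (1 / (M ℓ : ℝ)) * X ℓ m t ω := by
        rw [← Finset.sum_sub_distrib]
        refine Finset.sum_congr rfl fun t _ => by ring
      have e2 : ∑ t ∈ Finset.range (T ℓ),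
            (if t < T (ℓ - 1) then 1 / (T (ℓ - 1) : ℝ) else 0) * (1 / (M ℓ : ℝ)) * X ℓ m t ω
          = ∑ t ∈ Finset.range (T (ℓ - 1)),
            (1 / (T (ℓ - 1) : ℝ)) * (1 / (M ℓ : ℝ)) * X ℓ m t ω := by
        rw [← Finset.sum_subset (Finset.range_subset_range.2 hT'le) (fun t _ ht => by
          rw [if_neg (by simpa using ht), zero_mul, zero_mul])]
        exact Finset.sum_congr rfl fun t ht => by rw [if_pos (Finset.mem_range.1 ht)]
      rw [e1, e2, ← Finset.mul_sum, ← Finset.mul_sum]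
      ring
  rw [hfun]
  -- variance of a sum of independent scaled variables
  have hvar : variance (∑ p ∈ P, (fun ω => c p * X p.1 p.2.1 p.2.2 ω)) ℙ
      = ∑ p ∈ P, c p ^ 2 * μ₂ := by
    rw [IndepFun.variance_sum]
    · refine Finset.sum_congr rfl fun p _ => ?_
      rw [variance_const_mul, (hident p.1 p.2.1 p.2.2).variance_eq, hμ₂]
    · exact fun p _ => (hL2 p.1 p.2.1 p.2.2).const_mul (c p)
    · intro p hp q hq hpq
      have := hindep.indepFun (f := fun p : ℕ × ℕ × ℕ => X p.1 p.2.1 p.2.2) hpq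
      exact this.comp (measurable_const_mul (c p)) (measurable_const_mul (c q))
  rw [hvar]
  -- compute the sum of squared coefficients
  have hcoef : ∑ p ∈ P, c p ^ 2
      = 1 / ((M 0 : ℝ) * T 0)
        + ∑ ℓ ∈ Icc 1 L, (1 / (M ℓ : ℝ)) * (1 / (T (ℓ - 1) : ℝ) - 1 / (T ℓ : ℝ)) := by
    rw [hsum, hrange, Finset.sum_insert h0notin]
    have hM0 : (M 0 : ℝ) ≠ 0 := Nat.cast_ne_zero.2 (by have := hM 0 (Nat.zero_le L); omega)
    have hT0' : (T 0 : ℝ) ≠ 0 := Nat.cast_ne_zero.2 (by omega)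
    congr 1
    · -- level 0
      simp only [hc, reduceIte, Finset.sum_const, Finset.card_range, nsmul_eq_mul]
      field_simp
    · refine Finset.sum_congr rfl fun ℓ hℓ => ?_
      have hℓL : 1 ≤ ℓ ∧ ℓ ≤ L := Finset.mem_Icc.1 hℓ
      have hℓ0 : ℓ ≠ 0 := by omega
      have hT'le : T (ℓ - 1) ≤ T ℓ := (hTlt ℓ hℓ).le
      have hTp : (1 : ℕ) ≤ T (ℓ - 1) := hT (ℓ - 1) (by omega)
      have hMn : (M ℓ : ℝ) ≠ 0 := Nat.cast_ne_zero.2 (by have := hM ℓ hℓL.2; omega)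
      have hTn : (T ℓ : ℝ) ≠ 0 := Nat.cast_ne_zero.2 (by omega)
      have hT'n : (T (ℓ - 1) : ℝ) ≠ 0 := Nat.cast_ne_zero.2 (by omega)
      simp only [hc, if_neg hℓ0]
      have hsplit : ∑ t ∈ Finset.range (T ℓ),
            ((1 / (M ℓ : ℝ)) * (1 / (T ℓ : ℝ) -
              if t < T (ℓ - 1) then 1 / (T (ℓ - 1) : ℝ) else 0)) ^ 2
          = (T (ℓ - 1) : ℝ) * ((1 / (M ℓ : ℝ)) * (1 / (T ℓ : ℝ) - 1 / (T (ℓ - 1) : ℝ))) ^ 2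
            + ((T ℓ : ℝ) - (T (ℓ - 1) : ℝ)) * ((1 / (M ℓ : ℝ)) * (1 / (T ℓ : ℝ))) ^ 2 := by
        rw [Finset.range_eq_Ico, ← Finset.sum_Ico_consecutive _ (Nat.zero_le (T (ℓ - 1))) hT'le]
        congr 1
        · rw [Finset.sum_congr rfl (fun t ht => by
            rw [if_pos (Finset.mem_Ico.1 ht).2]), Finset.sum_const, nsmul_eq_mul,
            Nat.card_Ico, Nat.sub_zero]
        · rw [Finset.sum_congr rfl (fun t ht => by
            rw [if_neg (by exact Nat.not_lt.2 (Finset.mem_Ico.1 ht).1), sub_zero]),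
            Finset.sum_const, nsmul_eq_mul, Nat.card_Ico, Nat.cast_sub hT'le]
      rw [hsplit, Finset.sum_const, Finset.card_range, nsmul_eq_mul]
      field_simp
      ring
  calc ∑ p ∈ P, c p ^ 2 * μ₂ = (∑ p ∈ P, c p ^ 2) * μ₂ := by rw [Finset.sum_mul]
    _ = _ := by rw [hcoef, mul_comm]
end

section
/- (Explicit MLMC mean allocation.) With level variances v_0 = μ₂/T_0 and v_ℓ = μ₂(1/T_{ℓ-1} - 1/T_ℓ), and costs a_0 = T_0, a_ℓ = T_ℓ - T_{ℓ-1}, the optimal continuous allocation under budget c = ∑ a_ℓ M_ℓ is M_0* = (c/T_0)(1 + ∑_{ℓ=1}^L (T_ℓ - T_{ℓ-1})/√(T_ℓ T_{ℓ-1}))^{-1} and M_i* = (c/√(T_i T_{i-1}))(1 + ∑_{ℓ=1}^L (T_ℓ - T_{ℓ-1})/√(T_ℓ T_{ℓ-1}))^{-1} for i = 1,...,L; in particular the optimal allocation is independent of μ₂. -/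
open Finset

set_option maxHeartbeats 1000000

/-- Explicit optimal continuous allocation for the MLMC mean estimator: with
level variances `v₀ = μ₂/T₀`, `v_ℓ = μ₂(1/T_{ℓ-1} - 1/T_ℓ)` and costs
`a₀ = T₀`, `a_ℓ = T_ℓ - T_{ℓ-1}`, the stated `M*` (which does not involve `μ₂`)
satisfies the budget and minimises `∑ v_ℓ / M_ℓ`. -/
theorem explicit_mlmc_mean_allocation
    (L : ℕ) (T : ℕ → ℕ) (hT0 : 1 ≤ T 0) (hTmono : ∀ ℓ < L, T ℓ < T (ℓ + 1))
    (μ₂ c : ℝ) (hμ₂ : 0 < μ₂) (hc : 0 < c)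
    (v a : ℕ → ℝ)
    (hv0 : v 0 = μ₂ / T 0)
    (hvl : ∀ ℓ, 1 ≤ ℓ → ℓ ≤ L → v ℓ = μ₂ * (1 / (T (ℓ - 1) : ℝ) - 1 / (T ℓ : ℝ)))
    (ha0 : a 0 = T 0)
    (hal : ∀ ℓ, 1 ≤ ℓ → ℓ ≤ L → a ℓ = (T ℓ : ℝ) - (T (ℓ - 1) : ℝ))
    (Mstar : ℕ → ℝ)
    (hM0 : Mstar 0 = (c / (T 0 : ℝ))
      * (1 + ∑ ℓ ∈ Icc 1 L,
          ((T ℓ : ℝ) - (T (ℓ - 1) : ℝ)) / Real.sqrt ((T ℓ : ℝ) * (T (ℓ - 1) : ℝ)))⁻¹)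
    (hMi : ∀ i, 1 ≤ i → i ≤ L → Mstar i
      = (c / Real.sqrt ((T i : ℝ) * (T (i - 1) : ℝ)))
      * (1 + ∑ ℓ ∈ Icc 1 L,
          ((T ℓ : ℝ) - (T (ℓ - 1) : ℝ)) / Real.sqrt ((T ℓ : ℝ) * (T (ℓ - 1) : ℝ)))⁻¹) :
    (∑ ℓ ∈ range (L + 1), a ℓ * Mstar ℓ = c) ∧
    (∀ M : ℕ → ℝ, (∀ ℓ ≤ L, 0 < M ℓ) → ∑ ℓ ∈ range (L + 1), a ℓ * M ℓ = c →
      ∑ ℓ ∈ range (L + 1), v ℓ / Mstar ℓ ≤ ∑ ℓ ∈ range (L + 1), v ℓ / M ℓ) := by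
  -- basic positivity facts
  have hT1 : ∀ ℓ ≤ L, 1 ≤ T ℓ := by
    intro ℓ hℓ
    induction ℓ with
    | zero => exact hT0
    | succ n ih =>
      have h1 : n ≤ L := Nat.le_of_succ_le hℓ
      exact le_trans (ih h1) (hTmono n (Nat.lt_of_succ_le hℓ)).le
  have hTpos : ∀ ℓ ≤ L, (0:ℝ) < T ℓ := fun ℓ h => by
    exact_mod_cast Nat.lt_of_lt_of_le Nat.zero_lt_one (hT1 ℓ h)
  have hTlt : ∀ ℓ, 1 ≤ ℓ → ℓ ≤ L → ((T (ℓ-1) : ℝ) < T ℓ) := by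
    intro ℓ h1 hL
    have h2 : ℓ - 1 < L := by omega
    have h3 := hTmono (ℓ-1) h2
    rw [Nat.sub_add_cancel h1] at h3
    exact_mod_cast h3
  set d : ℕ → ℝ := fun ℓ => ((T ℓ:ℝ) - T (ℓ-1)) / Real.sqrt ((T ℓ:ℝ) * (T (ℓ-1):ℝ)) with hd
  set S : ℝ := 1 + ∑ ℓ ∈ Icc 1 L, d ℓ with hS
  clear_value S
  have hsqrtpos : ∀ ℓ, 1 ≤ ℓ → ℓ ≤ L → 0 < Real.sqrt ((T ℓ:ℝ) * (T (ℓ-1):ℝ)) := by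
    intro ℓ h1 h2
    exact Real.sqrt_pos.mpr (mul_pos (hTpos ℓ h2) (hTpos (ℓ-1) (by omega)))
  have hdpos : ∀ ℓ ∈ Icc 1 L, 0 < d ℓ := by
    intro ℓ hℓ
    obtain ⟨h1, h2⟩ := mem_Icc.mp hℓ
    exact div_pos (by linarith [hTlt ℓ h1 h2]) (hsqrtpos ℓ h1 h2)
  have hSpos : (0:ℝ) < S := by
    have h : 0 ≤ ∑ ℓ ∈ Icc 1 L, d ℓ := Finset.sum_nonneg fun ℓ h => (hdpos ℓ h).le
    rw [hS]; linarith
  have hSne : S ≠ 0 := ne_of_gt hSpos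
  have hsum_split : ∀ f : ℕ → ℝ,
      ∑ ℓ ∈ range (L+1), f ℓ = f 0 + ∑ ℓ ∈ Icc 1 L, f ℓ := by
    intro f
    rw [range_eq_Ico, Finset.sum_eq_sum_Ico_succ_bot (Nat.succ_pos L), Nat.succ_eq_add_one, Finset.Ico_add_one_right_eq_Icc]
  have hsumd : ∑ ℓ ∈ Icc 1 L, d ℓ = S - 1 := by rw [hS]; ring
  -- budget for Mstar
  have hbudget : ∑ ℓ ∈ range (L+1), a ℓ * Mstar ℓ = c := by
    rw [hsum_split]
    have h0 : a 0 * Mstar 0 = c * S⁻¹ := by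
      rw [ha0, hM0]
      have hT0' : (T 0 : ℝ) ≠ 0 := ne_of_gt (hTpos 0 (Nat.zero_le L))
      field_simp
    have hterm : ∀ ℓ ∈ Icc 1 L, a ℓ * Mstar ℓ = c * S⁻¹ * d ℓ := by
      intro ℓ h
      obtain ⟨h1, h2⟩ := mem_Icc.mp h
      rw [hal ℓ h1 h2, hMi ℓ h1 h2]
      have hs := hsqrtpos ℓ h1 h2
      simp only [hd]
      field_simp
    rw [h0, Finset.sum_congr rfl hterm, ← Finset.mul_sum, hsumd]
    field_simp
    ring
  refine ⟨hbudget, ?_⟩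
  -- value at Mstar
  have hvalstar : ∑ ℓ ∈ range (L+1), v ℓ / Mstar ℓ = μ₂ * S^2 / c := by
    rw [hsum_split]
    have h0 : v 0 / Mstar 0 = μ₂ * S / c := by
      rw [hv0, hM0]
      have hT0' : (T 0 : ℝ) ≠ 0 := ne_of_gt (hTpos 0 (Nat.zero_le L))
      field_simp
    have hterm : ∀ ℓ ∈ Icc 1 L, v ℓ / Mstar ℓ = μ₂ * S / c * d ℓ := by
      intro ℓ h
      obtain ⟨h1, h2⟩ := mem_Icc.mp h
      have hA : (0:ℝ) < T (ℓ-1) := hTpos (ℓ-1) (by omega)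
      have hB : (0:ℝ) < T ℓ := hTpos ℓ h2
      have hgen : ∀ x : ℝ, 0 < x → x^2 = (T ℓ:ℝ) * (T (ℓ-1):ℝ) →
          μ₂ * (1/(T (ℓ-1):ℝ) - 1/(T ℓ:ℝ)) / (c/x * S⁻¹)
            = μ₂ * S / c * (((T ℓ:ℝ) - (T (ℓ-1):ℝ))/x) := by
        intro x hx hx2
        have hxne : x ≠ 0 := ne_of_gt hx
        field_simp
        linear_combination ((T ℓ:ℝ) - (T (ℓ-1):ℝ)) * hx2
      rw [hvl ℓ h1 h2, hMi ℓ h1 h2]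
      simp only [hd]
      exact hgen _ (hsqrtpos ℓ h1 h2)
        (Real.sq_sqrt (by positivity))
    rw [h0, Finset.sum_congr rfl hterm, ← Finset.mul_sum, hsumd]
    field_simp
    ring
  -- nonnegativity of v and a on [0, L]
  have hvnn : ∀ ℓ ≤ L, 0 ≤ v ℓ := by
    intro ℓ hℓ
    rcases Nat.eq_zero_or_pos ℓ with h | h
    · subst h; rw [hv0]; positivity
    · rw [hvl ℓ h hℓ]
      have hA : (0:ℝ) < T (ℓ-1) := hTpos (ℓ-1) (by omega)
      have hB : (0:ℝ) < T ℓ := hTpos ℓ hℓ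
      have := hTlt ℓ h hℓ
      have h1 : 1 / (T ℓ : ℝ) ≤ 1 / (T (ℓ-1) : ℝ) := by
        apply one_div_le_one_div_of_le hA this.le
      exact mul_nonneg hμ₂.le (by linarith)
  have hann : ∀ ℓ ≤ L, 0 ≤ a ℓ := by
    intro ℓ hℓ
    rcases Nat.eq_zero_or_pos ℓ with h | h
    · subst h; rw [ha0]; positivity
    · rw [hal ℓ h hℓ]; exact sub_nonneg.mpr (hTlt ℓ h hℓ).le
  -- sum of sqrt(v*a)
  have hgsum : ∑ ℓ ∈ range (L+1), Real.sqrt (v ℓ * a ℓ) = Real.sqrt μ₂ * S := by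
    rw [hsum_split]
    have h0 : Real.sqrt (v 0 * a 0) = Real.sqrt μ₂ := by
      rw [hv0, ha0]
      have hT0' : (T 0 : ℝ) ≠ 0 := ne_of_gt (hTpos 0 (Nat.zero_le L))
      rw [div_mul_cancel₀ _ hT0']
    have hterm : ∀ ℓ ∈ Icc 1 L, Real.sqrt (v ℓ * a ℓ) = Real.sqrt μ₂ * d ℓ := by
      intro ℓ h
      obtain ⟨h1, h2⟩ := mem_Icc.mp h
      have hs := hsqrtpos ℓ h1 h2
      have hx2 : Real.sqrt ((T ℓ:ℝ) * (T (ℓ-1):ℝ)) ^ 2 = (T ℓ:ℝ) * (T (ℓ-1):ℝ) :=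
        Real.sq_sqrt (by positivity)
      have hA : (0:ℝ) < T (ℓ-1) := hTpos (ℓ-1) (by omega)
      have hB : (0:ℝ) < T ℓ := hTpos ℓ h2
      have hdnn : 0 ≤ d ℓ := (hdpos ℓ h).le
      have hsq2 : Real.sqrt μ₂ ^ 2 = μ₂ := Real.sq_sqrt hμ₂.le
      have key : v ℓ * a ℓ = (Real.sqrt μ₂ * d ℓ) ^ 2 := by
        have hrhs : (Real.sqrt μ₂ * d ℓ) ^ 2
            = μ₂ * (((T ℓ:ℝ) - (T (ℓ-1):ℝ))^2 / ((T ℓ:ℝ) * (T (ℓ-1):ℝ))) := by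
          simp only [hd, mul_pow, div_pow, hsq2, hx2]
        rw [hvl ℓ h1 h2, hal ℓ h1 h2, hrhs]
        field_simp
      rw [key, Real.sqrt_sq (mul_nonneg (Real.sqrt_nonneg μ₂) hdnn)]
    rw [h0, Finset.sum_congr rfl hterm, ← Finset.mul_sum, hsumd]
    ring
  -- Cauchy-Schwarz
  intro M hMpos hMc
  have cs := Finset.sum_mul_sq_le_sq_mul_sq (range (L+1))
    (fun ℓ => Real.sqrt (v ℓ / M ℓ)) (fun ℓ => Real.sqrt (a ℓ * M ℓ))
  have hfg : ∀ ℓ ∈ range (L+1),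
      Real.sqrt (v ℓ / M ℓ) * Real.sqrt (a ℓ * M ℓ) = Real.sqrt (v ℓ * a ℓ) := by
    intro ℓ h
    have hℓ := Nat.lt_succ_iff.mp (mem_range.mp h)
    rw [← Real.sqrt_mul (div_nonneg (hvnn ℓ hℓ) (hMpos ℓ hℓ).le)]
    congr 1
    have hstep : v ℓ / M ℓ * (a ℓ * M ℓ) = v ℓ * a ℓ * (M ℓ / M ℓ) := by ring
    rw [hstep, div_self (ne_of_gt (hMpos ℓ hℓ)), mul_one]
  have hf2 : ∀ ℓ ∈ range (L+1), Real.sqrt (v ℓ / M ℓ) ^ 2 = v ℓ / M ℓ := by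
    intro ℓ h
    have hℓ := Nat.lt_succ_iff.mp (mem_range.mp h)
    exact Real.sq_sqrt (div_nonneg (hvnn ℓ hℓ) (hMpos ℓ hℓ).le)
  have hg2 : ∀ ℓ ∈ range (L+1), Real.sqrt (a ℓ * M ℓ) ^ 2 = a ℓ * M ℓ := by
    intro ℓ h
    have hℓ := Nat.lt_succ_iff.mp (mem_range.mp h)
    exact Real.sq_sqrt (mul_nonneg (hann ℓ hℓ) (hMpos ℓ hℓ).le)
  rw [Finset.sum_congr rfl hfg, Finset.sum_congr rfl hf2, Finset.sum_congr rfl hg2,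
    hgsum, hMc] at cs
  have hμS : (Real.sqrt μ₂ * S) ^ 2 = μ₂ * S ^ 2 := by
    rw [mul_pow, Real.sq_sqrt hμ₂.le]
  rw [hμS] at cs
  rw [hvalstar]
  rw [div_le_iff₀ hc]
  linarith
end
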